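/- arXiv:2302.14517 — 2 statements merged into one kernel-verified Lean document; each statement's English description precedes it below -/
import Mathlib

section
/- Let x_1,...,x_k be points and for each j let Z_1^{(j)},...,Z_m^{(j)} be Bernoulli(p_j) indicators obtained from a common set of m i.i.d. model samples, with p̂_j their sample means. Then for any ρ ∈ (0,1], with probability at least 1−ρ, max over j of |μ̂(x_j) − μ(x_j)| ≤ 1/(m−1) + (4m/(m−1))·√(log(2k/ρ)/(2m))·(1 + √(log(2k/ρ)/(2m))), where μ(x_j) = 4p_j(1−p_j) and μ̂(x_j) = 4(m/(m−1))·p̂_j(1−p̂_j). -/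
open MeasureTheory ProbabilityTheory Real
open scoped ENNReal NNReal BigOperators


lemma bern_pos (p : ℝ) (hp0 : 0 ≤ p) (hp1 : p ≤ 1) (s : ℝ) :
    0 < 1 - p + p * Real.exp s := by
  rcases eq_or_lt_of_le hp1 with h | h
  · subst h; simpa using Real.exp_pos s
  · nlinarith [Real.exp_pos s, mul_nonneg hp0 (Real.exp_pos s).le]

lemma hoeffding_bernoulli (p t : ℝ) (hp0 : 0 ≤ p) (hp1 : p ≤ 1) :
    1 - p + p * Real.exp t ≤ Real.exp (p * t + t ^ 2 / 8) := by
  set c : ℝ → ℝ := fun s => 1 - p + p * Real.exp s with hc_def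
  have hc : ∀ s, 0 < c s := bern_pos p hp0 hp1
  have hcD : ∀ s, HasDerivAt c (p * Real.exp s) s := fun s =>
    ((Real.hasDerivAt_exp s).const_mul p).const_add (1 - p)
  set F : ℝ → ℝ := fun u => p * u + u ^ 2 / 8 - Real.log (c u) with hF_def
  set D : ℝ → ℝ := fun u => p + u / 4 - p * Real.exp u / c u with hD_def
  have hF : ∀ s, HasDerivAt F (D s) s := by
    intro s
    have h1 : HasDerivAt (fun u : ℝ => p * u + u ^ 2 / 8) (p + s / 4) s := by
      have := ((hasDerivAt_id s).const_mul p).add ((hasDerivAt_pow 2 s).div_const 8)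
      refine this.congr_deriv ?_
      ring
    exact h1.sub ((hcD s).log (hc s).ne')
  have hD : ∀ s, HasDerivAt D (1 / 4 - p * (1 - p) * Real.exp s / (c s) ^ 2) s := by
    intro s
    have h2 : HasDerivAt (fun u => p * Real.exp u / c u)
        ((p * Real.exp s * c s - p * Real.exp s * (p * Real.exp s)) / (c s) ^ 2) s :=
      ((Real.hasDerivAt_exp s).const_mul p).div (hcD s) (hc s).ne'
    have h1 : HasDerivAt (fun u : ℝ => p + u / 4) (1 / 4) s := by
      simpa using (hasDerivAt_id s).div_const (4 : ℝ) |>.const_add p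
    have := h1.sub h2
    refine this.congr_deriv ?_
    have hcs := (hc s).ne'
    field_simp [hc_def]
    ring
  have hDderiv_nonneg : ∀ s, 0 ≤ 1 / 4 - p * (1 - p) * Real.exp s / (c s) ^ 2 := by
    intro s
    have h4 : p * (1 - p) * Real.exp s / (c s) ^ 2 ≤ 1 / 4 := by
      rw [div_le_iff₀ (pow_pos (hc s) 2)]
      nlinarith [sq_nonneg ((1 - p) - p * Real.exp s)]
    linarith
  have hDmono : Monotone D :=
    monotone_of_deriv_nonneg (fun s => (hD s).differentiableAt)
      (fun s => by rw [(hD s).deriv]; exact hDderiv_nonneg s)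
  have hD0 : D 0 = 0 := by
    simp [hD_def, hc_def]
  have hF0 : F 0 = 0 := by
    simp [hF_def, hc_def]
  have hFcont : Continuous F := by
    have : Differentiable ℝ F := fun s => (hF s).differentiableAt
    exact this.continuous
  have hFt : 0 ≤ F t := by
    rcases le_total 0 t with ht | ht
    · have hmono : MonotoneOn F (Set.Ici (0 : ℝ)) := by
        apply monotoneOn_of_deriv_nonneg (convex_Ici 0) hFcont.continuousOn
          (fun s _ => (hF s).differentiableAt.differentiableWithinAt)
        intro s hs
        rw [(hF s).deriv]
        have : (0:ℝ) ≤ s := le_of_lt (by simpa using hs)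
        calc (0:ℝ) = D 0 := hD0.symm
          _ ≤ D s := hDmono this
      have := hmono Set.self_mem_Ici (by exact ht) ht
      simpa [hF0] using this
    · have hmono : AntitoneOn F (Set.Iic (0 : ℝ)) := by
        apply antitoneOn_of_deriv_nonpos (convex_Iic 0) hFcont.continuousOn
          (fun s _ => (hF s).differentiableAt.differentiableWithinAt)
        intro s hs
        rw [(hF s).deriv]
        have : s ≤ (0:ℝ) := le_of_lt (by simpa using hs)
        calc D s ≤ D 0 := hDmono this
          _ = 0 := hD0
      have := hmono (by exact ht : t ∈ Set.Iic (0:ℝ)) Set.self_mem_Iic ht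
      simpa [hF0] using this
  have hlog : Real.log (c t) ≤ p * t + t ^ 2 / 8 := by
    have h := hFt
    change 0 ≤ p * t + t ^ 2 / 8 - Real.log (c t) at h
    linarith
  calc c t = Real.exp (Real.log (c t)) := (Real.exp_log (hc t)).symm
    _ ≤ Real.exp (p * t + t ^ 2 / 8) := Real.exp_le_exp.2 hlog

lemma bern_pos' (p : ℝ) (hp0 : 0 ≤ p) (hp1 : p ≤ 1) (s : ℝ) :
    0 < 1 - p + p * Real.exp s := by
  rcases eq_or_lt_of_le hp1 with h | h
  · subst h; simpa using Real.exp_pos s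
  · nlinarith [Real.exp_pos s, mul_nonneg hp0 (Real.exp_pos s).le]

section tail
variable {Ω : Type*} [MeasurableSpace Ω] (P : Measure Ω) [IsProbabilityMeasure P]

lemma bern_mgf (m : ℕ) (p : ℝ) (hp0 : 0 ≤ p)
    (Z : Fin m → Ω → ℝ) (hmeas : ∀ i, Measurable (Z i))
    (hval : ∀ i ω, Z i ω = 0 ∨ Z i ω = 1)
    (hbern : ∀ i, P {ω | Z i ω = 1} = ENNReal.ofReal p)
    (i : Fin m) (t : ℝ) :
    mgf (Z i) P t = 1 - p + p * Real.exp t := by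
  have hrep : Z i = Set.indicator {ω | Z i ω = 1} (fun _ => (1:ℝ)) := by
    funext ω
    rcases hval i ω with h | h <;> simp [Set.indicator_apply, h]
  have hs : MeasurableSet {ω | Z i ω = 1} := by
    have : {ω | Z i ω = 1} = Z i ⁻¹' {1} := by ext ω; simp
    rw [this]
    exact hmeas i (measurableSet_singleton 1)
  have hZint : Integrable (Z i) P := by
    rw [hrep]
    exact (integrable_const (1:ℝ)).indicator hs
  have hZval : ∫ ω, Z i ω ∂P = p := by
    rw [hrep, integral_indicator_const (1:ℝ) hs, measureReal_def, hbern i, smul_eq_mul, mul_one,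
      ENNReal.toReal_ofReal hp0]
  have hptw : (fun ω => Real.exp (t * Z i ω)) = fun ω => 1 + (Real.exp t - 1) * Z i ω := by
    funext ω
    rcases hval i ω with h | h <;> simp [h]
  rw [mgf, hptw, integral_add (integrable_const 1) (hZint.const_mul _),
    MeasureTheory.integral_const_mul, hZval]
  simp
  ring

lemma bern_exp_integrable (m : ℕ) (p : ℝ)
    (Z : Fin m → Ω → ℝ) (hmeas : ∀ i, Measurable (Z i))
    (hval : ∀ i ω, Z i ω = 0 ∨ Z i ω = 1)
    (hbern : ∀ i, P {ω | Z i ω = 1} = ENNReal.ofReal p)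
    (i : Fin m) (t : ℝ) :
    Integrable (fun ω => Real.exp (t * Z i ω)) P := by
  have hrep : Z i = Set.indicator {ω | Z i ω = 1} (fun _ => (1:ℝ)) := by
    funext ω
    rcases hval i ω with h | h <;> simp [Set.indicator_apply, h]
  have hs : MeasurableSet {ω | Z i ω = 1} := by
    have : {ω | Z i ω = 1} = Z i ⁻¹' {1} := by ext ω; simp
    rw [this]
    exact hmeas i (measurableSet_singleton 1)
  have hZint : Integrable (Z i) P := by
    rw [hrep]
    exact (integrable_const (1:ℝ)).indicator hs
  have hptw : (fun ω => Real.exp (t * Z i ω)) = fun ω => 1 + (Real.exp t - 1) * Z i ω := by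
    funext ω
    rcases hval i ω with h | h <;> simp [h]
  rw [hptw]
  exact (integrable_const 1).add (hZint.const_mul _)

lemma bern_tail (m : ℕ) (p : ℝ) (hp0 : 0 ≤ p) (hp1 : p ≤ 1)
    (Z : Fin m → Ω → ℝ) (hmeas : ∀ i, Measurable (Z i))
    (hval : ∀ i ω, Z i ω = 0 ∨ Z i ω = 1)
    (hindep : iIndepFun Z P)
    (hbern : ∀ i, P {ω | Z i ω = 1} = ENNReal.ofReal p)
    (η : ℝ) (hη : 0 ≤ η) (hmpos : 0 < m) :
    P {ω | η < |(1 / (m:ℝ)) * ∑ i, Z i ω - p|} ≤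
      ENNReal.ofReal (2 * Real.exp (-2 * m * η ^ 2)) := by
  set S : Ω → ℝ := ∑ i, Z i with hS_def
  have hmR : (0:ℝ) < m := Nat.cast_pos.2 hmpos
  have hSapp : ∀ ω, S ω = ∑ i, Z i ω := fun ω => Finset.sum_apply ω Finset.univ Z
  have hmgf : ∀ t : ℝ, mgf S P t = (1 - p + p * Real.exp t) ^ m := by
    intro t
    rw [hS_def, iIndepFun.mgf_sum hindep hmeas]
    simp [bern_mgf P m p hp0 Z hmeas hval hbern]
  have hint : ∀ t : ℝ, Integrable (fun ω => Real.exp (t * S ω)) P := by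
    intro t
    exact iIndepFun.integrable_exp_mul_sum hindep hmeas
      (fun i _ => bern_exp_integrable P m p Z hmeas hval hbern i t)
  have hmgf_le : ∀ t : ℝ, mgf S P t ≤ Real.exp (m * (p * t + t ^ 2 / 8)) := by
    intro t
    rw [hmgf t]
    calc (1 - p + p * Real.exp t) ^ m ≤ (Real.exp (p * t + t ^ 2 / 8)) ^ m := by
          apply pow_le_pow_left₀ (bern_pos' p hp0 hp1 t).le
          exact hoeffding_bernoulli p t hp0 hp1
      _ = Real.exp (m * (p * t + t ^ 2 / 8)) := by
          rw [← Real.exp_nat_mul]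
  -- upper tail
  have hup : (P {ω | (m:ℝ) * (p + η) ≤ S ω}).toReal ≤ Real.exp (-2 * m * η ^ 2) := by
    have h := measure_ge_le_exp_mul_mgf (μ := P) (X := S) (t := 4 * η) ((m:ℝ) * (p + η))
      (by positivity) (hint _)
    calc (P {ω | (m:ℝ) * (p + η) ≤ S ω}).toReal
        ≤ Real.exp (-(4 * η) * ((m:ℝ) * (p + η))) * mgf S P (4 * η) := h
      _ ≤ Real.exp (-(4 * η) * ((m:ℝ) * (p + η))) *
            Real.exp (m * (p * (4 * η) + (4 * η) ^ 2 / 8)) := by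
          exact mul_le_mul_of_nonneg_left (hmgf_le _) (Real.exp_pos _).le
      _ = Real.exp (-2 * m * η ^ 2) := by
          rw [← Real.exp_add]
          congr 1
          ring
  -- lower tail
  have hlo : (P {ω | S ω ≤ (m:ℝ) * (p - η)}).toReal ≤ Real.exp (-2 * m * η ^ 2) := by
    have h := measure_le_le_exp_mul_mgf (μ := P) (X := S) (t := -(4 * η)) ((m:ℝ) * (p - η))
      (by simp [hη]) (hint _)
    calc (P {ω | S ω ≤ (m:ℝ) * (p - η)}).toReal
        ≤ Real.exp (-(-(4 * η)) * ((m:ℝ) * (p - η))) * mgf S P (-(4 * η)) := h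
      _ ≤ Real.exp (-(-(4 * η)) * ((m:ℝ) * (p - η))) *
            Real.exp (m * (p * (-(4 * η)) + (-(4 * η)) ^ 2 / 8)) := by
          exact mul_le_mul_of_nonneg_left (hmgf_le _) (Real.exp_pos _).le
      _ = Real.exp (-2 * m * η ^ 2) := by
          rw [← Real.exp_add]
          congr 1
          ring
  -- inclusion
  have hincl : {ω | η < |(1 / (m:ℝ)) * ∑ i, Z i ω - p|} ⊆
      {ω | (m:ℝ) * (p + η) ≤ S ω} ∪ {ω | S ω ≤ (m:ℝ) * (p - η)} := by
    intro ω hω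
    simp only [Set.mem_setOf_eq] at hω
    rcases lt_abs.1 hω with h | h
    · left
      show (m:ℝ) * (p + η) ≤ S ω
      rw [hSapp]
      have : p + η < (1 / (m:ℝ)) * ∑ i, Z i ω := by linarith
      calc (m:ℝ) * (p + η) ≤ (m:ℝ) * ((1 / (m:ℝ)) * ∑ i, Z i ω) :=
            le_of_lt (by exact (mul_lt_mul_iff_right₀ hmR).2 this)
        _ = ∑ i, Z i ω := by field_simp
    · right
      show S ω ≤ (m:ℝ) * (p - η)
      rw [hSapp]
      have : (1 / (m:ℝ)) * ∑ i, Z i ω < p - η := by linarith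
      calc ∑ i, Z i ω = (m:ℝ) * ((1 / (m:ℝ)) * ∑ i, Z i ω) := by field_simp
        _ ≤ (m:ℝ) * (p - η) := le_of_lt ((mul_lt_mul_iff_right₀ hmR).2 this)
  calc P {ω | η < |(1 / (m:ℝ)) * ∑ i, Z i ω - p|}
      ≤ P ({ω | (m:ℝ) * (p + η) ≤ S ω} ∪ {ω | S ω ≤ (m:ℝ) * (p - η)}) := measure_mono hincl
    _ ≤ P {ω | (m:ℝ) * (p + η) ≤ S ω} + P {ω | S ω ≤ (m:ℝ) * (p - η)} := measure_union_le _ _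
    _ ≤ ENNReal.ofReal (Real.exp (-2 * m * η ^ 2)) + ENNReal.ofReal (Real.exp (-2 * m * η ^ 2)) := by
        gcongr
        · rw [← ENNReal.ofReal_toReal (measure_ne_top P _)]
          exact ENNReal.ofReal_le_ofReal hup
        · rw [← ENNReal.ofReal_toReal (measure_ne_top P _)]
          exact ENNReal.ofReal_le_ofReal hlo
    _ = ENNReal.ofReal (2 * Real.exp (-2 * m * η ^ 2)) := by
        rw [← ENNReal.ofReal_add (Real.exp_pos _).le (Real.exp_pos _).le]
        congr 1
        ring
end tail

set_option maxHeartbeats 1000000 in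
/-- For k points with Bernoulli(p_j) indicators obtained from a common set of
m i.i.d. model samples, with probability at least 1-ρ the maximum over j of
|μ̂(x_j) - μ(x_j)| is at most
1/(m-1) + (4m/(m-1))·√(log(2k/ρ)/(2m))·(1 + √(log(2k/ρ)/(2m))). -/
theorem multi_point_disagreement_estimation_error_bound
    {Ω : Type*} [MeasurableSpace Ω] (P : Measure Ω) [IsProbabilityMeasure P]
    (m k : ℕ) (hm : 2 ≤ m) (hk : 1 ≤ k)
    (p : Fin k → ℝ) (hp : ∀ j, p j ∈ Set.Icc (0 : ℝ) 1)
    (Z : Fin k → Fin m → Ω → ℝ)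
    (hmeas : ∀ j i, Measurable (Z j i))
    (hval : ∀ j i ω, Z j i ω = 0 ∨ Z j i ω = 1)
    (hindep : ∀ j, iIndepFun (Z j) P)
    (hbern : ∀ j i, P {ω | Z j i ω = 1} = ENNReal.ofReal (p j))
    (ρ : ℝ) (hρ : ρ ∈ Set.Ioc (0 : ℝ) 1) :
    ENNReal.ofReal (1 - ρ) ≤
      P {ω | ∀ j : Fin k,
          |4 * ((m : ℝ) / ((m : ℝ) - 1)) *
              ((1 / (m : ℝ)) * ∑ i, Z j i ω) * (1 - (1 / (m : ℝ)) * ∑ i, Z j i ω)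
            - 4 * p j * (1 - p j)|
          ≤ 1 / ((m : ℝ) - 1)
            + (4 * (m : ℝ) / ((m : ℝ) - 1)) * Real.sqrt (Real.log (2 * k / ρ) / (2 * m))
              * (1 + Real.sqrt (Real.log (2 * k / ρ) / (2 * m)))} := by
  obtain ⟨hρ0, hρ1⟩ := hρ
  have hmR : (2:ℝ) ≤ (m:ℝ) := by exact_mod_cast hm
  have hmpos : (0:ℝ) < m := by linarith
  have hm1 : (0:ℝ) < (m:ℝ) - 1 := by linarith
  have hkR : (1:ℝ) ≤ (k:ℝ) := by exact_mod_cast hk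
  have hargpos : (0:ℝ) < 2 * k / ρ := by positivity
  have harg1 : (1:ℝ) ≤ 2 * k / ρ := by
    rw [le_div_iff₀ hρ0]
    linarith
  have hL : (0:ℝ) ≤ Real.log (2 * k / ρ) := Real.log_nonneg harg1
  set η : ℝ := Real.sqrt (Real.log (2 * k / ρ) / (2 * m)) with hη_def
  have hη0 : 0 ≤ η := Real.sqrt_nonneg _
  have hη2 : η ^ 2 = Real.log (2 * k / ρ) / (2 * m) := by
    rw [hη_def, Real.sq_sqrt (by positivity)]
  have hexpval : 2 * Real.exp (-2 * m * η ^ 2) = ρ / k := by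
    have h1 : (-2 : ℝ) * m * η ^ 2 = -Real.log (2 * k / ρ) := by
      rw [hη2]; field_simp
    rw [h1, Real.exp_neg, Real.exp_log hargpos]
    field_simp
  -- the per-point good events
  set A : Fin k → Set Ω :=
    fun j => {ω | |(1 / (m:ℝ)) * ∑ i, Z j i ω - p j| ≤ η} with hA_def
  have hAmeas : ∀ j, MeasurableSet (A j) := by
    intro j
    have hf : Measurable fun ω => |(1 / (m:ℝ)) * ∑ i, Z j i ω - p j| :=
      (((Finset.measurable_sum Finset.univ fun i _ => hmeas j i).const_mul _).sub
        measurable_const).abs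
    exact measurableSet_le hf measurable_const
  have hAc : ∀ j, P (A j)ᶜ ≤ ENNReal.ofReal (ρ / k) := by
    intro j
    have : (A j)ᶜ = {ω | η < |(1 / (m:ℝ)) * ∑ i, Z j i ω - p j|} := by
      ext ω; simp [hA_def, not_le]
    rw [this]
    calc P {ω | η < |(1 / (m:ℝ)) * ∑ i, Z j i ω - p j|}
        ≤ ENNReal.ofReal (2 * Real.exp (-2 * m * η ^ 2)) :=
          bern_tail P m (p j) (hp j).1 (hp j).2 (Z j) (hmeas j) (hval j) (hindep j)
            (hbern j) η hη0 (by exact_mod_cast hm.trans_lt' (by norm_num))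
      _ = ENNReal.ofReal (ρ / k) := by rw [hexpval]
  -- union bound
  have hunion : P (⋃ j, (A j)ᶜ) ≤ ENNReal.ofReal ρ := by
    calc P (⋃ j, (A j)ᶜ) ≤ ∑' j, P (A j)ᶜ := measure_iUnion_le _
      _ = ∑ j, P (A j)ᶜ := tsum_fintype _
      _ ≤ ∑ _j : Fin k, ENNReal.ofReal (ρ / k) := Finset.sum_le_sum fun j _ => hAc j
      _ = (k : ℝ≥0∞) * ENNReal.ofReal (ρ / k) := by
          rw [Finset.sum_const, Finset.card_univ, Fintype.card_fin, nsmul_eq_mul]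
      _ = ENNReal.ofReal ρ := by
          rw [← ENNReal.ofReal_natCast k, ← ENNReal.ofReal_mul (by positivity)]
          congr 1
          field_simp
  -- deterministic inclusion
  have hsub : (⋂ j, A j) ⊆ {ω | ∀ j : Fin k,
      |4 * ((m : ℝ) / ((m : ℝ) - 1)) *
          ((1 / (m : ℝ)) * ∑ i, Z j i ω) * (1 - (1 / (m : ℝ)) * ∑ i, Z j i ω)
        - 4 * p j * (1 - p j)|
      ≤ 1 / ((m : ℝ) - 1)
        + (4 * (m : ℝ) / ((m : ℝ) - 1)) * η * (1 + η)} := by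
    intro ω hω j
    have hωj : |(1 / (m:ℝ)) * ∑ i, Z j i ω - p j| ≤ η := Set.mem_iInter.1 hω j
    set a : ℝ := (1 / (m:ℝ)) * ∑ i, Z j i ω with ha_def
    set b : ℝ := p j with hb_def
    have hb0 : 0 ≤ b := (hp j).1
    have hb1 : b ≤ 1 := (hp j).2
    have hsum0 : 0 ≤ ∑ i, Z j i ω :=
      Finset.sum_nonneg fun i _ => by rcases hval j i ω with h | h <;> simp [h]
    have hsum1 : ∑ i, Z j i ω ≤ (m:ℝ) := by
      calc ∑ i, Z j i ω ≤ ∑ _i : Fin m, (1:ℝ) :=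
            Finset.sum_le_sum fun i _ => by rcases hval j i ω with h | h <;> simp [h]
        _ = (m:ℝ) := by simp
    have ha0 : 0 ≤ a := by
      rw [ha_def]; positivity
    have ha1 : a ≤ 1 := by
      rw [ha_def]
      rw [mul_comm, ← div_eq_mul_one_div]
      exact div_le_one_of_le₀ hsum1 hmpos.le
    -- key algebraic bound
    have habs2 : |1 - a - b| ≤ 1 := abs_le.2 ⟨by linarith, by linarith⟩
    have hprod : |(a - b) * (1 - a - b)| ≤ η * 1 := by
      rw [abs_mul]
      exact mul_le_mul hωj habs2 (abs_nonneg _) hη0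
    have hprod' : |(a - b) * (1 - a - b)| ≤ η := by linarith
    have hp1 : (a - b) * (1 - a - b) ≤ η := (le_abs_self _).trans hprod'
    have hp2 : -η ≤ (a - b) * (1 - a - b) := by
      have := (neg_abs_le ((a - b) * (1 - a - b)))
      linarith
    have hbq0 : 0 ≤ b * (1 - b) := mul_nonneg hb0 (by linarith)
    have hbq1 : b * (1 - b) ≤ 1 / 4 := by nlinarith [sq_nonneg (1 - 2 * b)]
    have hXeq : 4 * (m:ℝ) * a * (1 - a) - 4 * ((m:ℝ) - 1) * b * (1 - b) =
        4 * (m:ℝ) * ((a - b) * (1 - a - b)) + 4 * (b * (1 - b)) := by ring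
    have hcη2 : 0 ≤ (m:ℝ) * η * η := by positivity
    have hkey : |4 * (m:ℝ) * a * (1 - a) - 4 * ((m:ℝ) - 1) * b * (1 - b)| ≤
        1 + 4 * (m:ℝ) * η * (1 + η) := by
      have h4m : (0:ℝ) ≤ 4 * (m:ℝ) := by positivity
      have hu := mul_le_mul_of_nonneg_left hp1 h4m
      have hl := mul_le_mul_of_nonneg_left hp2 h4m
      rw [abs_le]
      constructor
      · linarith
      · linarith
    show |4 * ((m:ℝ) / ((m:ℝ) - 1)) * a * (1 - a) - 4 * b * (1 - b)| ≤
      1 / ((m:ℝ) - 1) + (4 * (m:ℝ) / ((m:ℝ) - 1)) * η * (1 + η)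
    have e1 : 4 * ((m:ℝ) / ((m:ℝ) - 1)) * a * (1 - a) - 4 * b * (1 - b) =
        (4 * (m:ℝ) * a * (1 - a) - 4 * ((m:ℝ) - 1) * b * (1 - b)) / ((m:ℝ) - 1) := by
      field_simp
    have e2 : 1 / ((m:ℝ) - 1) + (4 * (m:ℝ) / ((m:ℝ) - 1)) * η * (1 + η) =
        (1 + 4 * (m:ℝ) * η * (1 + η)) / ((m:ℝ) - 1) := by
      field_simp
    rw [e1, e2, abs_div, abs_of_pos hm1, div_le_div_iff_of_pos_right hm1]
    exact hkey
  -- conclude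
  have hiU : MeasurableSet (⋃ j, (A j)ᶜ) := MeasurableSet.iUnion fun j => (hAmeas j).compl
  have h1 : P (⋂ j, A j) = 1 - P (⋃ j, (A j)ᶜ) := by
    have heq : (⋂ j, A j) = (⋃ j, (A j)ᶜ)ᶜ := by simp [Set.compl_iUnion]
    rw [heq, measure_compl hiU (measure_ne_top P _), measure_univ]
  have hPiA : ENNReal.ofReal (1 - ρ) ≤ P (⋂ j, A j) := by
    rw [h1]
    calc ENNReal.ofReal (1 - ρ) = 1 - ENNReal.ofReal ρ := by
          rw [ENNReal.ofReal_sub _ hρ0.le, ENNReal.ofReal_one]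
      _ ≤ 1 - P (⋃ j, (A j)ᶜ) := tsub_le_tsub_left hunion 1
  exact hPiA.trans (measure_mono hsub)
end

section
/- For m ≥ 2, p ∈ [0,1], and α ∈ (0,1], if m ≥ 1 + (α + 2t(2+α) + 2√2·√(t(1+α)(2t+α)))/α² with t = log(2/ρ), then 1/(m−1) + (4m/(m−1))·η(1+η) ≤ α where η = √(t/(2m)). -/
/-- Sample-complexity closed form: for m ≥ 2, p ∈ [0,1], α ∈ (0,1], ρ ∈ (0,1),
t = log(2/ρ), if m ≥ 1 + (α + 2t(2+α) + 2√2·√(t(1+α)(2t+α)))/α², then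
1/(m-1) + (4m/(m-1))·η(1+η) ≤ α where η = √(t/(2m)). -/
theorem sample_complexity_bound
    (m : ℕ) (hm : 2 ≤ m) (p : ℝ) (hp : p ∈ Set.Icc (0 : ℝ) 1)
    (α ρ : ℝ) (hα : α ∈ Set.Ioc (0 : ℝ) 1) (hρ : ρ ∈ Set.Ioo (0 : ℝ) 1)
    (t : ℝ) (ht : t = Real.log (2 / ρ))
    (hmge : (m : ℝ) ≥ 1 + (α + 2 * t * (2 + α)
        + 2 * Real.sqrt 2 * Real.sqrt (t * (1 + α) * (2 * t + α))) / α ^ 2)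
    (η : ℝ) (hη : η = Real.sqrt (t / (2 * m))) :
    1 / ((m : ℝ) - 1) + (4 * (m : ℝ) / ((m : ℝ) - 1)) * η * (1 + η) ≤ α := by
  obtain ⟨hα0, hα1⟩ := hα
  obtain ⟨hρ0, hρ1⟩ := hρ
  set M : ℝ := (m : ℝ) with hMdef
  have hM2 : (2:ℝ) ≤ M := by rw [hMdef]; exact_mod_cast hm
  have hM0 : (0:ℝ) < M := by linarith
  have hM1 : (0:ℝ) < M - 1 := by linarith
  -- t > 1/2
  have ht2 : (1:ℝ)/2 < t := by
    have h1 : (2:ℝ) ≤ 2 / ρ := by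
      rw [le_div_iff₀ hρ0]; nlinarith
    have h2 : Real.log 2 ≤ Real.log (2/ρ) := Real.log_le_log (by norm_num) h1
    have h3 := Real.log_two_gt_d9
    rw [ht]; linarith
  -- merge the two square roots
  have hrr : 2 * Real.sqrt 2 * Real.sqrt (t * (1 + α) * (2 * t + α))
      = 2 * Real.sqrt (2 * (t * (1 + α) * (2 * t + α))) := by
    rw [mul_assoc, ← Real.sqrt_mul (by norm_num : (0:ℝ) ≤ 2)]
  rw [hrr] at hmge
  set r : ℝ := Real.sqrt (2 * (t * (1 + α) * (2 * t + α))) with hrdef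
  have htpos : (0:ℝ) < t := by linarith
  have hr0 : 0 ≤ r := Real.sqrt_nonneg _
  have hr2 : r ^ 2 = 2 * (t * (1 + α) * (2 * t + α)) :=
    Real.sq_sqrt (by nlinarith [mul_pos (mul_pos htpos (show (0:ℝ) < 1 + α by linarith)) (show (0:ℝ) < 2*t + α by linarith)])
  set s : ℝ := Real.sqrt (2 * M * t) with hsdef
  have hs0 : 0 ≤ s := Real.sqrt_nonneg _
  have hs2 : s ^ 2 = 2 * M * t := Real.sq_sqrt (by positivity)
  have hηs : s = 2 * M * η := by
    rw [hη, hsdef, show 2 * M * t = (2*M)^2 * (t / (2*M)) by field_simp,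
      Real.sqrt_mul (by positivity), Real.sqrt_sq (by positivity)]
  have hη2 : 2 * M * η ^ 2 = t := by
    have : η ^ 2 = t / (2*M) := by rw [hη]; exact Real.sq_sqrt (by positivity)
    rw [this]; field_simp
  -- key bound from hmge
  have hw : α + 2*t*(2+α) + 2*r ≤ (M-1) * α^2 := by
    have h1 : (α + 2*t*(2+α) + 2*r) / α^2 ≤ M - 1 := by linarith [hmge]
    exact (div_le_iff₀ (by positivity)).mp h1
  -- Step 1: α(M-1) ≥ 1 + 2t
  have h1 : 1 + 2*t ≤ α * (M-1) := by
    nlinarith [hw, hr0, ht2, hα0, hα1, mul_pos hα0 hM1]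
  -- Step 2: quadratic inequality (scaled by α²)
  have h2key : 8*t*α^2*M ≤ ((M-1)*α^2 - α*(1+2*t))^2 := by
    have hw0 : 0 ≤ (M-1)*α^2 - (α + 2*t*(2+α) + 2*r) := by linarith
    have hid : ((M-1)*α^2 - α*(1+2*t))^2 - 8*t*α^2*M
        = ((M-1)*α^2 - (α + 2*t*(2+α) + 2*r))^2
          + 4*r*((M-1)*α^2 - (α + 2*t*(2+α) + 2*r)) := by
      linear_combination 4*hr2
    linarith [hid, sq_nonneg ((M-1)*α^2 - (α + 2*t*(2+α) + 2*r)),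
      mul_nonneg hr0 hw0]
  -- Step 3: 2s ≤ α(M-1) - (1+2t)
  have hα2 : (0:ℝ) < α^2 := by positivity
  have h4' : α^2 * (2*s)^2 ≤ α^2 * (α*(M-1) - (1+2*t))^2 := by
    calc α^2 * (2*s)^2 = 8*t*α^2*M := by linear_combination 4*α^2*hs2
      _ ≤ ((M-1)*α^2 - α*(1+2*t))^2 := h2key
      _ = α^2 * (α*(M-1) - (1+2*t))^2 := by ring
  have h4 : (2*s)^2 ≤ (α*(M-1) - (1+2*t))^2 := le_of_mul_le_mul_left h4' hα2
  have h3 : 2*s ≤ α*(M-1) - (1+2*t) := by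
    calc 2*s = Real.sqrt ((2*s)^2) := (Real.sqrt_sq (by linarith)).symm
      _ ≤ Real.sqrt ((α*(M-1) - (1+2*t))^2) := Real.sqrt_le_sqrt h4
      _ = α*(M-1) - (1+2*t) := Real.sqrt_sq (by linarith)
  -- Finish
  have hfin : 4*M*η*(1+η) = 2*s + 2*t := by
    linear_combination (-2)*hηs + 2*hη2
  have e : 1/(M-1) + 4*M/(M-1)*η*(1+η) = (1 + (2*s + 2*t))/(M-1) := by
    rw [← hfin]; field_simp
  rw [e, div_le_iff₀ hM1]
  linarith [h3]
end
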